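/- Let m+1 ≥ r ≥ 2 and let F be an r-graph that either has at most m vertices, or has m+1 vertices one of which has degree 1. Let K be the complete r-graph on [m], and let L be the r-graph obtained from K by duplicating vertex 1 into a new vertex 1' (i.e. adding, for every edge e of K containing 1, the edge (e∖{1}) ∪ {1'}) and adding one further edge e that contains both 1 and 1'. Then L contains a member of ℋ^F_{m+1}. -/
import Mathlib


open Finset
open scoped BigOperators Classical

abbrev HG := Finset (Finset ℕ)

/-- The vertex set of a hypergraph: union of its edges. -/
def hverts (G : HG) : Finset ℕ := G.sup id

/-- `G` is `r`-uniform: every edge has `r` vertices. -/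
def Uniform (r : ℕ) (G : HG) : Prop := ∀ e ∈ G, e.card = r

/-- The pair `{u,v}` is covered in `G`: some edge contains both. -/
def Covered (G : HG) (u v : ℕ) : Prop := ∃ e ∈ G, u ∈ e ∧ v ∈ e

/-- `G` contains a copy of `F`. -/
def IsCopyIn (F G : HG) : Prop :=
  ∃ φ : ℕ → ℕ, Set.InjOn φ (hverts F : Set ℕ) ∧ ∀ e ∈ F, e.image φ ∈ G

/-- The subgraph of `G` induced by `C`. -/
def induced (G : HG) (C : Finset ℕ) : HG := G.filter (fun e => e ⊆ C)

/-- `G` contains a member of the family `ℋ^F_p`: there is a core `C` of `p`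
vertices such that the subgraph induced by `C` contains a copy of `F` and every
pair of vertices of `C` is covered in `G`. -/
def ContainsHFam (F : HG) (p : ℕ) (G : HG) : Prop :=
  ∃ C : Finset ℕ, C.card = p ∧ IsCopyIn F (induced G C) ∧
    ∀ u ∈ C, ∀ v ∈ C, u ≠ v → Covered G u v

/-- Turán number: maximum number of edges of an `r`-graph on vertex set `[n]`
satisfying the "freeness" predicate `P`. -/
noncomputable def exNum (r n : ℕ) (P : HG → Prop) : ℕ :=
  sSup {m : ℕ | ∃ G : HG, Uniform r G ∧ (∀ e ∈ G, e ⊆ Finset.range n) ∧ P G ∧ G.card = m}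

/-- The Lagrangian polynomial `p_G(x) = r! ∑_{e∈G} ∏_{i∈e} x_i`. -/
noncomputable def pPoly (r : ℕ) (G : HG) (x : ℕ → ℝ) : ℝ :=
  (r.factorial : ℝ) * ∑ e ∈ G, ∏ i ∈ e, x i

/-- The Lagrangian `λ(G)`. -/
noncomputable def lagrangian (r : ℕ) (G : HG) : ℝ :=
  sSup {v : ℝ | ∃ x : ℕ → ℝ, (∀ i, 0 ≤ x i) ∧ (∑ i ∈ hverts G, x i) = 1 ∧ v = pPoly r G x}

/-- The Lagrangian density `π_λ(F)`. -/
noncomputable def piLambda (r : ℕ) (F : HG) : ℝ :=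
  sSup {v : ℝ | ∃ G : HG, Uniform r G ∧ ¬ IsCopyIn F G ∧ v = lagrangian r G}

/-- `G` is `m`-partite. -/
def MPartite (m : ℕ) (G : HG) : Prop :=
  ∃ f : ℕ → Fin m, ∀ e ∈ G, ∀ u ∈ e, ∀ v ∈ e, u ≠ v → f u ≠ f v

/-- `ℋ^F_{m+1}` is `m`-stable. -/
def MStable (r m : ℕ) (F : HG) : Prop :=
  ∀ ε : ℝ, 0 < ε → ∃ δ : ℝ, 0 < δ ∧ ∃ n₁ : ℕ, ∀ n : ℕ, n₁ ≤ n →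
    ∀ G : HG, Uniform r G → (∀ e ∈ G, e ⊆ Finset.range n) →
      ¬ ContainsHFam F (m + 1) G →
      ((m.descFactorial r : ℝ) / (m : ℝ) ^ r - δ) * (n.choose r : ℝ) < (G.card : ℝ) →
      ∃ Z : Finset ℕ, (Z.card : ℝ) ≤ ε * n ∧
        MPartite m (G.filter (fun e => Disjoint e Z))

/-- Pairs of vertices of `C` not covered in `F`. -/
def uncovPairs (F : HG) (C : Finset ℕ) : Finset (Finset ℕ) :=
  (C.powersetCard 2).filter (fun s => ¬ ∃ e ∈ F, s ⊆ e)

/-- `H` is an expanded `p`-clique with an embedded `F` (i.e. a copy of `H^F_p`). -/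
def IsExpandedClique (r : ℕ) (F : HG) (p : ℕ) (H : HG) : Prop :=
  ∃ C : Finset ℕ, hverts F ⊆ C ∧ C.card = p ∧
    ∃ B : Finset ℕ → Finset ℕ,
      (∀ s ∈ uncovPairs F C, (B s).card = r - 2 ∧ Disjoint (B s) C) ∧
      (∀ s ∈ uncovPairs F C, ∀ t ∈ uncovPairs F C, s ≠ t → Disjoint (B s) (B t)) ∧
      H = F ∪ (uncovPairs F C).image (fun s => s ∪ B s)

/-- The balanced complete `m`-partite `r`-graph `T_r(n,m)` on vertex set `[n]`,
with parts the residue classes modulo `m`. -/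
def turanGraph (r n m : ℕ) : HG :=
  ((Finset.range n).powersetCard r).filter
    (fun e => ∀ u ∈ e, ∀ v ∈ e, u ≠ v → u % m ≠ v % m)

/-- `F` has a vertex of degree 1. -/
def HasDeg1Vertex (F : HG) : Prop :=
  ∃ v ∈ hverts F, (F.filter (fun e => v ∈ e)).card = 1

/-- `T` is a tree on `k` vertices (a connected 2-graph with `k-1` edges). -/
def IsTreeGraph (T : HG) (k : ℕ) : Prop :=
  Uniform 2 T ∧ (hverts T).card = k ∧ T.card + 1 = k ∧
    ∀ u ∈ hverts T, ∀ v ∈ hverts T,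
      Relation.ReflTransGen (fun a b => ({a, b} : Finset ℕ) ∈ T) u v

/-- The `k`-vertex tree `T` satisfies the Erdős–Sós conjecture:
`ex(n,T) ≤ n(k-2)/2` for all `n`. -/
def SatisfiesES (T : HG) (k : ℕ) : Prop :=
  ∀ n : ℕ, 2 * exNum 2 n (fun G => ¬ IsCopyIn T G) ≤ n * (k - 2)

/-- The function `f_r(x) = (∏_{i=1}^{r-1} (x+i-2)) / (x+r-3)^r`. -/
noncomputable def frf (r : ℕ) (x : ℝ) : ℝ :=
  (∏ i ∈ Finset.Icc 1 (r - 1), (x + (i : ℝ) - 2)) / (x + (r : ℝ) - 3) ^ r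

/-- `M` is the rightmost maximum of `f_r` on `[2,∞)`. -/
def IsRightmostMax (r : ℕ) (M : ℝ) : Prop :=
  2 ≤ M ∧ (∀ y : ℝ, 2 ≤ y → frf r y ≤ frf r M) ∧
    (∀ y : ℝ, 2 ≤ y → frf r y = frf r M → y ≤ M)

/-- `F` is the `(r-2)`-fold enlargement of the 2-graph `T`. -/
def IsEnlargement (r : ℕ) (T F : HG) : Prop :=
  ∃ D : Finset ℕ, D.card = r - 2 ∧ Disjoint D (hverts T) ∧ F = T.image (fun e => e ∪ D)

/-- The link of a vertex `i` in `G`. -/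
def link (G : HG) (i : ℕ) : HG := (G.filter (fun e => i ∈ e)).image (fun e => e.erase i)

/-- `λ_i = ∂p_G(x)/∂x_i = r! ∑_{f ∈ L_G(i)} ∏_{j∈f} x_j`. -/
noncomputable def lamI (r : ℕ) (G : HG) (x : ℕ → ℝ) (i : ℕ) : ℝ :=
  (r.factorial : ℝ) * ∑ f ∈ link G i, ∏ j ∈ f, x j

/-- `G` is a blowup of `L`. -/
def IsBlowup (L G : HG) : Prop :=
  ∃ V : ℕ → Finset ℕ,
    (∀ i ∈ hverts L, ∀ j ∈ hverts L, i ≠ j → Disjoint (V i) (V j)) ∧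
    ∀ e : Finset ℕ, e ∈ G ↔ ∃ f ∈ L, ∃ φ : ℕ → ℕ, (∀ i ∈ f, φ i ∈ V i) ∧ e = f.image φ

/-- `G` contains an `s`-sunflower with kernel `D`. -/
def HasSunflower (G : HG) (D : Finset ℕ) (s : ℕ) : Prop :=
  ∃ S : Finset (Finset ℕ), S ⊆ G ∧ S.card = s ∧ (∀ A ∈ S, D ⊆ A) ∧
    ∀ A ∈ S, ∀ B ∈ S, A ≠ B → A ∩ B = D

/-- `F` covers pairs: every pair of vertices of `F` lies in some edge. -/
def CoversPairs (F : HG) : Prop :=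
  ∀ u ∈ hverts F, ∀ v ∈ hverts F, u ≠ v → Covered F u v

/-- `d(G)`: the maximum average degree among nonempty subgraphs of `G`. -/
noncomputable def maxAvgDeg (G : HG) : ℝ :=
  sSup {v : ℝ | ∃ H : HG, H ⊆ G ∧ H.Nonempty ∧ v = 2 * (H.card : ℝ) / ((hverts H).card : ℝ)}

/-- Symmetrizing `v` to `u`: remove all edges containing `v` and replace them
with `{D ∪ {v} : D ∈ L_G(u)}`. -/
def symmetrize (G : HG) (u v : ℕ) : HG :=
  G.filter (fun e => v ∉ e) ∪ (G.filter (fun e => u ∈ e)).image (fun e => insert v (e.erase u))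

/-- The noncomplete transversals of an `m`-partite `r`-graph `L` with parts `A`. -/
noncomputable def noncompTrans (r m : ℕ) (L : HG) (A : Fin m → Finset ℕ) : Finset (Finset ℕ) :=
  ((Finset.univ.biUnion A).powerset).filter
    (fun S => (∀ i, (S ∩ A i).card = 1) ∧ ∃ e : Finset ℕ, e ⊆ S ∧ e.card = r ∧ e ∉ L)

lemma mem_hverts' {G : HG} {a : ℕ} : a ∈ hverts G ↔ ∃ f ∈ G, a ∈ f := by
  simp [hverts, Finset.mem_sup]

lemma subset_hverts' {G : HG} {f : Finset ℕ} (hf : f ∈ G) : f ⊆ hverts G :=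
  fun a ha => mem_hverts'.mpr ⟨f, hf, ha⟩

lemma exists_injOn_finset (s t : Finset ℕ) (h : s.card ≤ t.card) :
    ∃ f : ℕ → ℕ, Set.InjOn f s ∧ ∀ a ∈ s, f a ∈ t := by
  obtain ⟨f, hmap, hinj⟩ := Set.Finite.exists_injOn_of_encard_le (s := (s : Set ℕ))
    (t := (t : Set ℕ)) s.finite_toSet (by
      rw [Set.encard_coe_eq_coe_finsetCard, Set.encard_coe_eq_coe_finsetCard]
      exact_mod_cast h)
  exact ⟨f, hinj, fun a ha => hmap ha⟩


/-- The complete `r`-graph on `[m] = {1,…,m}` with vertex `1`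
duplicated into `m+1` plus an edge covering `{1, m+1}` contains a member of
`ℋ^F_{m+1}`. -/
theorem stmt_13 (m r : ℕ) (hr : 2 ≤ r) (hrm : r ≤ m + 1)
    (F : HG) (hF : Uniform r F)
    (hstruct : (hverts F).card ≤ m ∨ ((hverts F).card = m + 1 ∧ HasDeg1Vertex F))
    (e : Finset ℕ) (he : e.card = r) (h1 : 1 ∈ e) (h1' : m + 1 ∈ e) :
    ContainsHFam F (m + 1)
      (((Finset.Icc 1 m).powersetCard r ∪
          ((Finset.Icc 1 m).powersetCard r |>.filter (fun f => 1 ∈ f)).image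
            (fun f => insert (m + 1) (f.erase 1))) ∪ {e}) := by
  classical
  set L : HG := ((Finset.Icc 1 m).powersetCard r ∪
          ((Finset.Icc 1 m).powersetCard r |>.filter (fun f => 1 ∈ f)).image
            (fun f => insert (m + 1) (f.erase 1))) ∪ {e} with hLdef
  have heL : e ∈ L := by
    rw [hLdef]; exact Finset.mem_union_right _ (Finset.mem_singleton_self e)
  have hKL : ∀ f : Finset ℕ, f ⊆ Finset.Icc 1 m → f.card = r → f ∈ L := by
    intro f hs hc
    rw [hLdef]
    exact Finset.mem_union_left _ (Finset.mem_union_left _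
      (Finset.mem_powersetCard.mpr ⟨hs, hc⟩))
  have hDL : ∀ f : Finset ℕ, f ⊆ Finset.Icc 1 m → f.card = r → 1 ∈ f →
      insert (m + 1) (f.erase 1) ∈ L := by
    intro f hs hc h1f
    rw [hLdef]
    refine Finset.mem_union_left _ (Finset.mem_union_right _ ?_)
    exact Finset.mem_image.mpr ⟨f, Finset.mem_filter.mpr
      ⟨Finset.mem_powersetCard.mpr ⟨hs, hc⟩, h1f⟩, rfl⟩
  by_cases hcase : r = m + 1
  · -- core is e itself
    refine ⟨e, by rw [he, hcase], ?_, fun u hu v hv huv => ⟨e, heL, hu, hv⟩⟩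
    have heI : e ∈ induced L e := Finset.mem_filter.mpr ⟨heL, Finset.Subset.refl e⟩
    have hcardF : (hverts F).card ≤ m + 1 := by
      rcases hstruct with h | ⟨h, _⟩
      · omega
      · omega
    obtain ⟨φ, hinj, hmap⟩ := exists_injOn_finset (hverts F) e (by rw [he, hcase]; exact hcardF)
    refine ⟨φ, hinj, fun f hf => ?_⟩
    have hfsub : f ⊆ hverts F := subset_hverts' hf
    have hfcard : f.card = r := hF f hf
    have hfv : f = hverts F := Finset.eq_of_subset_of_card_le hfsub (by omega)
    have hsub : f.image φ ⊆ e := by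
      intro a ha
      obtain ⟨b, hb, rfl⟩ := Finset.mem_image.mp ha
      exact hmap b (hfsub hb)
    have : f.image φ = e := by
      apply Finset.eq_of_subset_of_card_le hsub
      rw [Finset.card_image_of_injOn (hinj.mono (by exact_mod_cast hfsub)), hfcard, he]
    rw [this]; exact heI
  · -- main case : r ≤ m
    have hrm2 : r ≤ m := by omega
    have hm2 : 2 ≤ m := by omega
    have hIccsub : Finset.Icc 1 m ⊆ Finset.Icc 1 (m + 1) := by
      intro a; simp only [Finset.mem_Icc]; omega
    have hcardIcc : (Finset.Icc 1 m).card = m := by rw [Nat.card_Icc]; omega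
    -- coverage lemmas
    have hcov1 : ∀ u ∈ Finset.Icc 1 m, ∀ v ∈ Finset.Icc 1 m, Covered L u v := by
      intro u hu v hv
      obtain ⟨f, hsub, hfsub, hfcard⟩ := Finset.exists_subsuperset_card_eq
        (s := ({u, v} : Finset ℕ)) (t := Finset.Icc 1 m) (n := r)
        (by intro a ha; rcases Finset.mem_insert.mp ha with rfl | ha
            · exact hu
            · rw [Finset.mem_singleton.mp ha]; exact hv)
        (le_trans (Finset.card_insert_le _ _) (by simp; omega)) (by rw [hcardIcc]; omega)
      exact ⟨f, hKL f hfsub hfcard, hsub (Finset.mem_insert_self _ _),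
        hsub (Finset.mem_insert_of_mem (Finset.mem_singleton_self _))⟩
    have hcov2 : ∀ u ∈ Finset.Icc 1 m, Covered L u (m + 1) := by
      intro u hu
      by_cases hu1 : u = 1
      · exact ⟨e, heL, hu1 ▸ h1, h1'⟩
      · obtain ⟨f, hsub, hfsub, hfcard⟩ := Finset.exists_subsuperset_card_eq
          (s := ({1, u} : Finset ℕ)) (t := Finset.Icc 1 m) (n := r)
          (by intro a ha; rcases Finset.mem_insert.mp ha with rfl | ha
              · simp only [Finset.mem_Icc]; omega
              · rw [Finset.mem_singleton.mp ha]; exact hu)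
          (le_trans (Finset.card_insert_le _ _) (by simp; omega)) (by rw [hcardIcc]; omega)
        have h1f : 1 ∈ f := hsub (Finset.mem_insert_self _ _)
        have huf : u ∈ f := hsub (Finset.mem_insert_of_mem (Finset.mem_singleton_self _))
        exact ⟨insert (m + 1) (f.erase 1), hDL f hfsub hfcard h1f,
          Finset.mem_insert_of_mem (Finset.mem_erase.mpr ⟨hu1, huf⟩),
          Finset.mem_insert_self _ _⟩
    have hcov : ∀ u ∈ Finset.Icc 1 (m + 1), ∀ v ∈ Finset.Icc 1 (m + 1), u ≠ v →
        Covered L u v := by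
      intro u hu v hv huv
      simp only [Finset.mem_Icc] at hu hv
      by_cases hum : u ≤ m
      · by_cases hvm : v ≤ m
        · exact hcov1 u (Finset.mem_Icc.mpr ⟨hu.1, hum⟩) v (Finset.mem_Icc.mpr ⟨hv.1, hvm⟩)
        · have : v = m + 1 := by omega
          rw [this]; exact hcov2 u (Finset.mem_Icc.mpr ⟨hu.1, hum⟩)
      · have hueq : u = m + 1 := by omega
        have hvm : v ≤ m := by omega
        obtain ⟨f, hfL, hf1, hf2⟩ := hcov2 v (Finset.mem_Icc.mpr ⟨hv.1, hvm⟩)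
        exact ⟨f, hfL, hueq ▸ hf2, hf1⟩
    refine ⟨Finset.Icc 1 (m + 1), by rw [Nat.card_Icc]; omega, ?_, hcov⟩
    -- copy of F
    rcases hstruct with hle | ⟨hcard, v, hvF, hdeg⟩
    · obtain ⟨φ, hinj, hmap⟩ := exists_injOn_finset (hverts F) (Finset.Icc 1 m)
        (by omega)
      refine ⟨φ, hinj, fun f hf => ?_⟩
      have hfsub : f ⊆ hverts F := subset_hverts' hf
      have himsub : f.image φ ⊆ Finset.Icc 1 m := by
        intro a ha
        obtain ⟨b, hb, rfl⟩ := Finset.mem_image.mp ha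
        exact hmap b (hfsub hb)
      have himcard : (f.image φ).card = r := by
        rw [Finset.card_image_of_injOn (hinj.mono (by exact_mod_cast hfsub)), hF f hf]
      exact Finset.mem_filter.mpr ⟨hKL _ himsub himcard, himsub.trans hIccsub⟩
    · -- degree-1 vertex case
      obtain ⟨e₀, he₀⟩ := Finset.card_eq_one.mp hdeg
      have he₀mem : e₀ ∈ F.filter (fun f => v ∈ f) := he₀ ▸ Finset.mem_singleton_self e₀
      have he₀F : e₀ ∈ F := (Finset.mem_filter.mp he₀mem).1
      have hve₀ : v ∈ e₀ := (Finset.mem_filter.mp he₀mem).2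
      have huniq : ∀ f ∈ F, v ∈ f → f = e₀ := by
        intro f hf hvf
        have : f ∈ F.filter (fun g => v ∈ g) := Finset.mem_filter.mpr ⟨hf, hvf⟩
        rw [he₀] at this
        exact Finset.mem_singleton.mp this
      set S : Finset ℕ := (hverts F).erase v with hSdef
      have hScard : S.card = m := by
        rw [hSdef, Finset.card_erase_of_mem hvF, hcard]; omega
      have he₀sub : e₀.erase v ⊆ S := by
        intro a ha
        obtain ⟨hav, hae⟩ := Finset.mem_erase.mp ha
        exact Finset.mem_erase.mpr ⟨hav, subset_hverts' he₀F hae⟩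
      have he₀card : (e₀.erase v).card = r - 1 := by
        rw [Finset.card_erase_of_mem hve₀, hF e₀ he₀F]
      -- find w ∈ S, w ∉ e₀
      have : (S \ e₀.erase v).Nonempty := by
        rw [← Finset.card_pos, Finset.card_sdiff_of_subset he₀sub, hScard, he₀card]; omega
      obtain ⟨w, hw⟩ := this
      have hwS : w ∈ S := (Finset.mem_sdiff.mp hw).1
      have hwv : w ≠ v := (Finset.mem_erase.mp hwS).1
      have hwF : w ∈ hverts F := (Finset.mem_erase.mp hwS).2
      have hwe₀ : w ∉ e₀ := by
        intro hcon
        exact (Finset.mem_sdiff.mp hw).2 (Finset.mem_erase.mpr ⟨hwv, hcon⟩)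
      obtain ⟨ψ, hψinj, hψmap⟩ := exists_injOn_finset (S.erase w) (Finset.Icc 2 m)
        (by rw [Finset.card_erase_of_mem hwS, hScard, Nat.card_Icc]; omega)
      set φ : ℕ → ℕ := fun a => if a = v then m + 1 else if a = w then 1 else ψ a with hφdef
      have hφv : φ v = m + 1 := by simp [hφdef]
      have hφw : φ w = 1 := by simp [hφdef, hwv]
      have hφo : ∀ a, a ≠ v → a ≠ w → φ a = ψ a := by
        intro a h1 h2; simp [hφdef, h1, h2]
      have hψrange : ∀ a ∈ hverts F, a ≠ v → a ≠ w → ψ a ∈ Finset.Icc 2 m := by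
        intro a ha hav haw
        exact hψmap a (Finset.mem_erase.mpr ⟨haw, Finset.mem_erase.mpr ⟨hav, ha⟩⟩)
      have hInj : Set.InjOn φ (hverts F) := by
        intro a ha b hb hab
        simp only [Finset.mem_coe] at ha hb
        by_cases hav : a = v <;> by_cases hbv : b = v
        · rw [hav, hbv]
        · exfalso
          by_cases hbw : b = w
          · rw [hav, hbw, hφv, hφw] at hab; omega
          · rw [hav, hφv, hφo b hbv hbw] at hab
            have := Finset.mem_Icc.mp (hψrange b hb hbv hbw); omega
        · exfalso
          by_cases haw : a = w
          · rw [hbv, haw, hφv, hφw] at hab; omega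
          · rw [hbv, hφv, hφo a hav haw] at hab
            have := Finset.mem_Icc.mp (hψrange a ha hav haw); omega
        · by_cases haw : a = w <;> by_cases hbw : b = w
          · rw [haw, hbw]
          · exfalso
            rw [haw, hφw, hφo b hbv hbw] at hab
            have := Finset.mem_Icc.mp (hψrange b hb hbv hbw); omega
          · exfalso
            rw [hbw, hφw, hφo a hav haw] at hab
            have := Finset.mem_Icc.mp (hψrange a ha hav haw); omega
          · rw [hφo a hav haw, hφo b hbv hbw] at hab
            exact hψinj (Finset.mem_coe.mpr (Finset.mem_erase.mpr
              ⟨haw, Finset.mem_erase.mpr ⟨hav, ha⟩⟩))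
              (Finset.mem_coe.mpr (Finset.mem_erase.mpr
              ⟨hbw, Finset.mem_erase.mpr ⟨hbv, hb⟩⟩)) hab
      refine ⟨φ, hInj, fun f hf => ?_⟩
      by_cases hfe₀ : f = e₀
      · -- the special edge
        subst hfe₀
        have himsub : (f.erase v).image φ ⊆ Finset.Icc 2 m := by
          intro a ha
          obtain ⟨b, hb, rfl⟩ := Finset.mem_image.mp ha
          obtain ⟨hbv, hbf⟩ := Finset.mem_erase.mp hb
          have hbw : b ≠ w := fun h => hwe₀ (h ▸ hbf)
          rw [hφo b hbv hbw]
          exact hψrange b (subset_hverts' hf hbf) hbv hbw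
        have h1nim : (1 : ℕ) ∉ (f.erase v).image φ := by
          intro hcon
          have := Finset.mem_Icc.mp (himsub hcon); omega
        have himcard : ((f.erase v).image φ).card = r - 1 := by
          rw [Finset.card_image_of_injOn (hInj.mono ?_), Finset.card_erase_of_mem hve₀,
            hF f hf]
          exact_mod_cast (Finset.erase_subset _ _).trans (subset_hverts' hf)
        set g : Finset ℕ := insert 1 ((f.erase v).image φ) with hgdef
        have hgsub : g ⊆ Finset.Icc 1 m := by
          rw [hgdef]
          intro a ha
          rcases Finset.mem_insert.mp ha with rfl | ha
          · simp only [Finset.mem_Icc]; omega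
          · have := Finset.mem_Icc.mp (himsub ha)
            simp only [Finset.mem_Icc]; omega
        have hgcard : g.card = r := by
          rw [hgdef, Finset.card_insert_of_notMem h1nim, himcard]; omega
        have h1g : (1 : ℕ) ∈ g := by rw [hgdef]; exact Finset.mem_insert_self _ _
        have hgerase : g.erase 1 = (f.erase v).image φ := by
          rw [hgdef, Finset.erase_insert h1nim]
        have hLmem : insert (m + 1) ((f.erase v).image φ) ∈ L := by
          rw [← hgerase]; exact hDL g hgsub hgcard h1g
        have himeq : f.image φ = insert (m + 1) ((f.erase v).image φ) := by
          conv_lhs => rw [← Finset.insert_erase hve₀]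
          rw [Finset.image_insert, hφv]
        rw [himeq]
        refine Finset.mem_filter.mpr ⟨hLmem, ?_⟩
        intro a ha
        rcases Finset.mem_insert.mp ha with rfl | ha
        · simp only [Finset.mem_Icc]; omega
        · have := Finset.mem_Icc.mp (himsub ha)
          simp only [Finset.mem_Icc]; omega
      · -- ordinary edge: v ∉ f
        have hvf : v ∉ f := fun h => hfe₀ (huniq f hf h)
        have himsub : f.image φ ⊆ Finset.Icc 1 m := by
          intro a ha
          obtain ⟨b, hb, rfl⟩ := Finset.mem_image.mp ha
          have hbv : b ≠ v := fun h => hvf (h ▸ hb)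
          by_cases hbw : b = w
          · rw [hbw, hφw]; simp only [Finset.mem_Icc]; omega
          · rw [hφo b hbv hbw]
            have := Finset.mem_Icc.mp (hψrange b (subset_hverts' hf hb) hbv hbw)
            simp only [Finset.mem_Icc]; omega
        have himcard : (f.image φ).card = r := by
          rw [Finset.card_image_of_injOn (hInj.mono (by exact_mod_cast subset_hverts' hf)),
            hF f hf]
        exact Finset.mem_filter.mpr ⟨hKL _ himsub himcard, himsub.trans hIccsub⟩
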